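/- Let n ≥ 2, k ≥ 1, l ≥ 1, and let a ∈ R(2k,n) satisfy Σ_{|α| ≤ 2k-1}|a_α| < l and inf_{ξ ∈ ∂B_n}|P_0[a](ξ)| > 1/l. Let ρ_l = 1 + l² and define a_j(ξ) = (1/(2πi)) ∮_{|ζ|=ρ_l} ζ^{j-1}/P[a](ζξ) dζ for j ∈ ℕ, ξ ∈ ∂B_n. Then |a_j(ξ)| ≤ l (1 + l²)^{j+1-2k} for all ξ ∈ ∂B_n and all j ∈ ℕ. -/

import Mathlib

open Finset

/-- Multi-indices over `Fin n` with degree at most `d`. -/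
def degLE (n d : ℕ) : Finset (Fin n → ℕ) :=
  (Finset.range (d + 1)).biUnion (Finset.Nat.antidiagonalTuple n)

/-- Multi-indices over `Fin n` with degree exactly `d`. -/
def degEQ (n d : ℕ) : Finset (Fin n → ℕ) := Finset.Nat.antidiagonalTuple n d

/-- The principal symbol `P₀[a](ξ) = ∑_{|α| = 2k} a_α ξ^α`. -/
noncomputable def P0 (n k : ℕ) (a : (Fin n → ℕ) → ℝ) (ξ : Fin n → ℝ) : ℝ :=
  ∑ α ∈ degEQ n (2 * k), a α * ∏ i, ξ i ^ α i

/-- The polynomial `P[a](ζξ) = ∑_{|α| ≤ 2k} a_α ζ^{|α|} ξ^α` for complex `ζ`. -/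
noncomputable def PC (n k : ℕ) (a : (Fin n → ℕ) → ℝ) (ξ : Fin n → ℝ) (ζ : ℂ) : ℂ :=
  ∑ α ∈ degLE n (2 * k), (a α : ℂ) * ζ ^ (∑ i, α i) * ((∏ i, ξ i ^ α i : ℝ) : ℂ)

lemma degLE_sum_le {n d : ℕ} {α : Fin n → ℕ} (h : α ∈ degLE n d) : ∑ i, α i ≤ d := by
  simp only [degLE, Finset.mem_biUnion, Finset.mem_range,
    Finset.Nat.mem_antidiagonalTuple] at h
  obtain ⟨m, hm, rfl⟩ := h
  omega

lemma degLE_split (n k : ℕ) (hk : 1 ≤ k) :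
    degLE n (2 * k) = degEQ n (2 * k) ∪ degLE n (2 * k - 1) := by
  have h : 2 * k + 1 = (2 * k - 1) + 1 + 1 := by omega
  have h2 : 2 * k - 1 + 1 = 2 * k := by omega
  rw [degLE, degLE, degEQ, h, Finset.range_add_one, Finset.biUnion_insert, h2]

lemma degLE_disj (n k : ℕ) (hk : 1 ≤ k) :
    Disjoint (degEQ n (2 * k)) (degLE n (2 * k - 1)) := by
  rw [Finset.disjoint_left]
  intro α hα hα'
  have h1 : ∑ i, α i = 2 * k := Finset.Nat.mem_antidiagonalTuple.mp hα
  have h2 := degLE_sum_le hα'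
  omega

/-- The bound `|a_j(ξ)| ≤ l (1+l²)^{j+1-2k}` for the contour-integral coefficients
on the circle of radius `ρ_l = 1 + l²`. -/
theorem statement6 (n k l : ℕ) (hn : 2 ≤ n) (hk : 1 ≤ k) (hl : 1 ≤ l)
    (a : (Fin n → ℕ) → ℝ)
    (ha1 : (∑ α ∈ degLE n (2 * k - 1), |a α|) < (l : ℝ))
    (ha2 : (1 : ℝ) / l < ⨅ ξ : Metric.sphere (0 : EuclideanSpace ℝ (Fin n)) 1,
      |P0 n k a (fun i => (ξ : EuclideanSpace ℝ (Fin n)) i)|)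
    (j : ℕ) (ξ : EuclideanSpace ℝ (Fin n)) (hξ : ‖ξ‖ = 1) :
    ‖(1 / (2 * Real.pi * Complex.I)) *
        ∮ ζ in C(0, 1 + (l : ℝ) ^ 2), ζ ^ ((j : ℤ) - 1) / PC n k a (fun i => ξ i) ζ‖
      ≤ (l : ℝ) * (1 + (l : ℝ) ^ 2) ^ ((j : ℤ) + 1 - 2 * k) := by
  have hl1 : (1 : ℝ) ≤ l := by exact_mod_cast hl
  have hlpos : (0 : ℝ) < l := by linarith
  set ρ : ℝ := 1 + (l : ℝ) ^ 2 with hρdef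
  have hρ1 : (1 : ℝ) ≤ ρ := by nlinarith
  have hρpos : (0 : ℝ) < ρ := by linarith
  have hρne : ρ ≠ 0 := hρpos.ne'
  set ξ' : Fin n → ℝ := fun i => ξ i with hξ'def
  set m : ℕ := 2 * k - 1 with hmdef
  have hm : m + 1 = 2 * k := by omega
  -- coordinate bound
  have hcoord : ∀ i, |ξ' i| ≤ 1 := by
    intro i
    have hnorm := EuclideanSpace.norm_eq ξ
    rw [hξ] at hnorm
    have hsum : ∑ i, ‖ξ i‖ ^ 2 = 1 := by
      have h0 : (0:ℝ) ≤ ∑ i, ‖ξ i‖ ^ 2 := by positivity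
      nlinarith [Real.sq_sqrt h0, hnorm.symm]
    have hle : ‖ξ i‖ ^ 2 ≤ 1 := by
      calc ‖ξ i‖ ^ 2 ≤ ∑ i, ‖ξ i‖ ^ 2 :=
            Finset.single_le_sum (f := fun i => ‖ξ i‖ ^ 2)
              (fun i _ => by positivity) (Finset.mem_univ i)
        _ = 1 := hsum
    have h2 : |ξ i| ^ 2 ≤ 1 := by rwa [Real.norm_eq_abs] at hle
    nlinarith [abs_nonneg (ξ i)]
  have hprod : ∀ α : Fin n → ℕ, |∏ i, ξ' i ^ α i| ≤ 1 := by
    intro α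
    rw [Finset.abs_prod]
    apply Finset.prod_le_one (fun i _ => by positivity)
    intro i _
    rw [abs_pow]
    exact pow_le_one₀ (abs_nonneg _) (hcoord i)
  -- P0 lower bound
  have hP0 : 1 / (l : ℝ) < |P0 n k a ξ'| := by
    refine lt_of_lt_of_le ha2 ?_
    refine ciInf_le ⟨0, ?_⟩ (⟨ξ, by simp [hξ]⟩ : Metric.sphere (0 : EuclideanSpace ℝ (Fin n)) 1)
    rintro x ⟨y, rfl⟩
    exact abs_nonneg _
  -- lower bound for PC on the circle
  have key : ∀ ζ ∈ Metric.sphere (0 : ℂ) ρ,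
      ρ ^ m / l ≤ ‖PC n k a ξ' ζ‖ := by
    intro ζ hζ
    have hζabs : ‖ζ‖ = ρ := by
      simpa using (Metric.mem_sphere.mp hζ)
    have hsplit : PC n k a ξ' ζ =
        (∑ α ∈ degEQ n (2 * k), (a α : ℂ) * ζ ^ (∑ i, α i) * ((∏ i, ξ' i ^ α i : ℝ) : ℂ))
        + ∑ α ∈ degLE n (2 * k - 1), (a α : ℂ) * ζ ^ (∑ i, α i) * ((∏ i, ξ' i ^ α i : ℝ) : ℂ) := by
      rw [PC, degLE_split n k hk, Finset.sum_union (degLE_disj n k hk)]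
    have hS1 : (∑ α ∈ degEQ n (2 * k), (a α : ℂ) * ζ ^ (∑ i, α i) * ((∏ i, ξ' i ^ α i : ℝ) : ℂ))
        = ζ ^ (2 * k) * ((P0 n k a ξ' : ℝ) : ℂ) := by
      rw [P0]
      push_cast
      rw [Finset.mul_sum]
      refine Finset.sum_congr rfl fun α hα => ?_
      rw [Finset.Nat.mem_antidiagonalTuple.mp hα]
      ring
    have hS1abs : ‖ζ ^ (2 * k) * ((P0 n k a ξ' : ℝ) : ℂ)‖
        = ρ ^ (2 * k) * |P0 n k a ξ'| := by
      rw [norm_mul, norm_pow, hζabs, Complex.norm_real, Real.norm_eq_abs]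
    have hterm : ∀ α ∈ degLE n (2 * k - 1),
        ‖(a α : ℂ) * ζ ^ (∑ i, α i) * ((∏ i, ξ' i ^ α i : ℝ) : ℂ)‖
          ≤ |a α| * ρ ^ m := by
      intro α hα
      rw [norm_mul, norm_mul, norm_pow, hζabs, Complex.norm_real, Complex.norm_real,
        Real.norm_eq_abs, Real.norm_eq_abs]
      have h1 : ρ ^ (∑ i, α i) ≤ ρ ^ m := pow_le_pow_right₀ hρ1 (degLE_sum_le hα)
      have h2 : |a α| * ρ ^ (∑ i, α i) * |∏ i, ξ' i ^ α i| ≤ |a α| * ρ ^ (∑ i, α i) * 1 :=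
        mul_le_mul_of_nonneg_left (hprod α) (by positivity)
      have h3 : |a α| * ρ ^ (∑ i, α i) ≤ |a α| * ρ ^ m :=
        mul_le_mul_of_nonneg_left h1 (abs_nonneg _)
      nlinarith [abs_nonneg (a α)]
    have hS2abs : ‖∑ α ∈ degLE n (2 * k - 1), (a α : ℂ) * ζ ^ (∑ i, α i) * ((∏ i, ξ' i ^ α i : ℝ) : ℂ)‖
        ≤ (l : ℝ) * ρ ^ m := by
      refine le_trans (norm_sum_le _ _) ?_
      refine le_trans (Finset.sum_le_sum hterm) ?_
      rw [← Finset.sum_mul]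
      exact mul_le_mul_of_nonneg_right ha1.le (by positivity)
    have htri : ρ ^ (2 * k) * |P0 n k a ξ'| - (l : ℝ) * ρ ^ m
        ≤ ‖PC n k a ξ' ζ‖ := by
      rw [hsplit, hS1]
      set X := ζ ^ (2 * k) * ((P0 n k a ξ' : ℝ) : ℂ) with hX
      set Y := ∑ α ∈ degLE n (2 * k - 1),
        (a α : ℂ) * ζ ^ (∑ i, α i) * ((∏ i, ξ' i ^ α i : ℝ) : ℂ) with hY
      have h2 : ‖X‖ - ‖Y‖ ≤ ‖X + Y‖ := by
        have := norm_sub_norm_le X (-Y)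
        simpa [sub_neg_eq_add] using this
      rw [hS1abs] at h2
      linarith
    have hmain : ρ ^ m / l ≤ ρ ^ (2 * k) * |P0 n k a ξ'| - (l : ℝ) * ρ ^ m := by
      have h4 : 1 ≤ |P0 n k a ξ'| * l := by
        rw [div_lt_iff₀ hlpos] at hP0
        linarith
      have hρm : (0:ℝ) < ρ ^ m := by positivity
      have h2k : ρ ^ (2 * k) = ρ ^ m * ρ := by rw [← hm, pow_succ]
      rw [div_le_iff₀ hlpos, h2k]
      have h5 : ρ ^ m * ρ * 1 ≤ ρ ^ m * ρ * (|P0 n k a ξ'| * l) :=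
        mul_le_mul_of_nonneg_left h4 (by positivity)
      nlinarith [h5, hρm, sq_nonneg ((l:ℝ))]
    linarith
  -- the integral bound
  set C : ℝ := ρ ^ ((j : ℤ) - 1) * ((l : ℝ) / ρ ^ m) with hCdef
  have hzpos : (0:ℝ) < ρ ^ ((j : ℤ) - 1) := zpow_pos hρpos _
  have hbound : ∀ ζ ∈ Metric.sphere (0 : ℂ) ρ,
      ‖ζ ^ ((j : ℤ) - 1) / PC n k a ξ' ζ‖ ≤ C := by
    intro ζ hζ
    have hζabs : ‖ζ‖ = ρ := by
      simpa using (Metric.mem_sphere.mp hζ)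
    rw [norm_div, norm_zpow, hζabs]
    have hinv : 1 / ‖PC n k a ξ' ζ‖ ≤ (l : ℝ) / ρ ^ m := by
      have h0 : (0:ℝ) < ρ ^ m / l := by positivity
      have := one_div_le_one_div_of_le h0 (key ζ hζ)
      rwa [one_div_div] at this
    calc ρ ^ ((j : ℤ) - 1) / ‖PC n k a ξ' ζ‖
        = ρ ^ ((j : ℤ) - 1) * (1 / ‖PC n k a ξ' ζ‖) := by ring
      _ ≤ ρ ^ ((j : ℤ) - 1) * ((l : ℝ) / ρ ^ m) :=
          mul_le_mul_of_nonneg_left hinv hzpos.le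
  have hint : ‖∮ ζ in C(0, ρ), ζ ^ ((j : ℤ) - 1) / PC n k a ξ' ζ‖
      ≤ 2 * Real.pi * ρ * C :=
    circleIntegral.norm_integral_le_of_norm_le_const hρpos.le hbound
  have habs1 : ‖1 / (2 * Real.pi * Complex.I)‖ = 1 / (2 * Real.pi) := by
    rw [norm_div, norm_one, norm_mul, norm_mul, Complex.norm_I, Complex.norm_two,
      Complex.norm_real, Real.norm_eq_abs, abs_of_pos Real.pi_pos, mul_one]
  rw [norm_mul, habs1]
  have hzfact : ρ ^ ((j : ℤ) + 1 - 2 * k) = ρ * ρ ^ ((j : ℤ) - 1) / ρ ^ (m : ℤ) := by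
    have hexp : (j : ℤ) + 1 - 2 * k = 1 + ((j : ℤ) - 1) - (m : ℤ) := by
      push_cast; omega
    rw [hexp, zpow_sub₀ hρne, zpow_add₀ hρne, zpow_one]
  have hfinal : 1 / (2 * Real.pi) * (2 * Real.pi * ρ * C)
      = (l : ℝ) * ρ ^ ((j : ℤ) + 1 - 2 * k) := by
    have hπ : Real.pi ≠ 0 := Real.pi_ne_zero
    rw [hCdef, hzfact, zpow_natCast]
    have hρm : (ρ:ℝ) ^ m ≠ 0 := by positivity
    field_simp
  calc (1 / (2 * Real.pi)) * ‖∮ ζ in C(0, ρ), ζ ^ ((j : ℤ) - 1) / PC n k a ξ' ζ‖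
      ≤ 1 / (2 * Real.pi) * (2 * Real.pi * ρ * C) := by
        apply mul_le_mul_of_nonneg_left _ (by positivity)
        exact hint
    _ = (l : ℝ) * ρ ^ ((j : ℤ) + 1 - 2 * k) := hfinal
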